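/- Let A ⊆ R^p be a set of finite type (A − A is discrete) and let R > 0. Choose ε > 0 with ε < min{1, |(a−b) − (c−d)|} over all a,b,c,d ∈ A with |a−b| < 2R+4, |c−d| < 2R+4, and a−b ≠ c−d (in particular ε < |a−b| for distinct a,b ∈ A). Suppose T ∈ R^p satisfies: for every a ∈ A there exists a' ∈ A with |a + T − a'| < ε, and suppose A is relatively dense with the property that every ball of radius R+1 contains a point of A. If a ∈ A and a + T ∈ A, then for every b ∈ A with |a − b| < 2R+3 one has b + T ∈ A. -/
import Mathlib

open Metric

/-- Propagation of an ε-almost period of a finite-type set: with ε chosen below the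
gaps of the difference set at scale `2R+4`, if `T` is an ε-almost period of `A`,
every ball of radius `R+1` meets `A`, and `a, a + T ∈ A`, then `b + T ∈ A` for
every `b ∈ A` with `|a − b| < 2R + 3`. -/
theorem stmt3 (p : ℕ) (A : Set (EuclideanSpace ℝ (Fin p))) (R ε : ℝ)
    (hR : 0 < R) (hε : 0 < ε) (hε1 : ε < 1)
    (hgap : ∀ a ∈ A, ∀ b ∈ A, ∀ c ∈ A, ∀ d ∈ A,
      ‖a - b‖ < 2 * R + 4 → ‖c - d‖ < 2 * R + 4 → a - b ≠ c - d →
        ε < ‖(a - b) - (c - d)‖)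
    (T : EuclideanSpace ℝ (Fin p))
    (hT : ∀ a ∈ A, ∃ a' ∈ A, ‖a + T - a'‖ < ε)
    (hdense : ∀ x : EuclideanSpace ℝ (Fin p), ∃ a ∈ A, dist x a ≤ R + 1)
    (a : EuclideanSpace ℝ (Fin p)) (ha : a ∈ A) (haT : a + T ∈ A) :
    ∀ b ∈ A, ‖a - b‖ < 2 * R + 3 → b + T ∈ A := by
  intro b hb hab
  obtain ⟨b', hb', hbb'⟩ := hT b hb
  have hnorm : ‖(a + T) - b'‖ < 2 * R + 4 := by
    have : (a + T) - b' = (a - b) + (b + T - b') := by abel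
    calc ‖(a + T) - b'‖ ≤ ‖a - b‖ + ‖b + T - b'‖ := by rw [this]; exact norm_add_le _ _
      _ < (2 * R + 3) + 1 := add_lt_add hab (hbb'.trans hε1)
      _ = 2 * R + 4 := by ring
  have heq : (a + T) - b' = a - b := by
    by_contra hne
    have := hgap _ haT _ hb' _ ha _ hb hnorm (hab.trans (by linarith)) hne
    have h2 : ((a + T) - b') - (a - b) = b + T - b' := by abel
    rw [h2] at this
    linarith
  have : b' = b + T := by
    have := sub_eq_sub_iff_sub_eq_sub.mp heq
    -- heq: (a+T) - b' = a - b
    have : b + T - b' = 0 := by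
      have h2 : b + T - b' = ((a + T) - b') - (a - b) := by abel
      rw [h2, heq, sub_self]
    exact (sub_eq_zero.mp this).symm
  rwa [← this]
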